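/- Let f be holomorphic near z ∈ ℂ with f′(z) ≠ 0, and set σ_n[f] = S_n[f]/(n+1)!. Then for every integer n ≥ 2, σ_n[f](z) = ψ_n[f](z) + Σ_{k=2}^{n−2} ψ_k[f](z) σ_{n−k}[f](z), where ψ_k[f] are the Aharonov invariants of f. -/

import Mathlib

open Filter Topology FormalMultilinearSeries


lemma aux_summable_norm {a : ℕ → ℂ} {w₀ w : ℂ} (h : Summable fun m => a m * w₀ ^ m)
    (hw : ‖w‖ < ‖w₀‖) : Summable fun m => ‖a m * w ^ m‖ := by
  have h0 : (0:ℝ) < ‖w₀‖ := lt_of_le_of_lt (norm_nonneg w) hw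
  obtain ⟨C, hC⟩ := (h.tendsto_atTop_zero.norm.bddAbove_range)
  set t : ℝ := ‖w‖ / ‖w₀‖ with ht
  have ht0 : 0 ≤ t := div_nonneg (norm_nonneg _) h0.le
  have ht1 : t < 1 := (div_lt_one h0).2 hw
  have key : ∀ m, ‖a m * w ^ m‖ ≤ C * t ^ m := by
    intro m
    have h1 : ‖a m * w ^ m‖ = ‖a m * w₀ ^ m‖ * t ^ m := by
      rw [norm_mul, norm_mul, norm_pow, norm_pow, ht, div_pow, mul_assoc, ← mul_div_assoc,
        mul_comm (‖w₀‖ ^ m), mul_div_assoc, div_self (pow_ne_zero m h0.ne'), mul_one]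
    rw [h1]
    exact mul_le_mul_of_nonneg_right (hC ⟨m, rfl⟩) (pow_nonneg ht0 m)
  exact Summable.of_nonneg_of_le (fun m => norm_nonneg _) key
    ((summable_geometric_of_lt_one ht0 ht1).mul_left C)



/-- The Möbius-normalized function `V(z,w) = N_z(f(z+w))` used by Tamanoi. -/
noncomputable def tamanoiV (f : ℂ → ℂ) (z w : ℂ) : ℂ :=
  deriv f z * (f (z + w) - f z) /
    ((1 / 2) * iteratedDeriv 2 f z * (f (z + w) - f z) + (deriv f z) ^ 2)

/-- Tamanoi's Schwarzian derivative of virtual order `n`. -/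
noncomputable def tamanoiS (f : ℂ → ℂ) (n : ℕ) (z : ℂ) : ℂ :=
  iteratedDeriv (n + 1) (tamanoiV f z) 0

/-- `σ_n[f] = ψ_n[f] + ∑_{k=2}^{n-2} ψ_k[f] σ_{n-k}[f]` where `σ_n[f] = S_n[f]/(n+1)!`
and the `ψ_k[f]` are the Aharonov invariants, defined by the expansion
`f'(z)/(f(z+w) - f(z)) = 1/w - ∑_{n≥1} ψ_n[f](z) w^{n-1}` for small `w ≠ 0`. -/
theorem sigma_psi_recursion (f : ℂ → ℂ) (z : ℂ) (hf : AnalyticAt ℂ f z)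
    (hf' : deriv f z ≠ 0) (ψ : ℕ → ℂ) (r : ℝ) (hr : 0 < r)
    (hψ : ∀ w : ℂ, w ≠ 0 → ‖w‖ < r →
      HasSum (fun m : ℕ => ψ (m + 1) * w ^ m)
        (1 / w - deriv f z / (f (z + w) - f z)))
    (n : ℕ) (hn : 2 ≤ n) :
    tamanoiS f n z / ((n + 1).factorial : ℂ) =
      ψ n + ∑ k ∈ Finset.Icc 2 (n - 2),
        ψ k * (tamanoiS f (n - k) z / (((n - k) + 1).factorial : ℂ)) := by
  classical
  set a : ℂ := deriv f z with ha
  set b : ℂ := (1/2 : ℂ) * iteratedDeriv 2 f z with hb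
  set g : ℂ → ℂ := fun w => f (z + w) - f z with hgdef
  -- analyticity of the shifted function and of V
  have hfz : AnalyticAt ℂ (fun w : ℂ => f (z + w)) 0 := by
    have h1 : AnalyticAt ℂ (fun w : ℂ => z + w) 0 := analyticAt_const.add analyticAt_id
    have h2 : AnalyticAt ℂ f ((fun w : ℂ => z + w) 0) := by simpa using hf
    exact h2.comp h1
  have hg : AnalyticAt ℂ g 0 := hfz.sub analyticAt_const
  have hgzero : g 0 = 0 := by simp [hgdef]
  have hV : AnalyticAt ℂ (tamanoiV f z) 0 := by
    have hnum : AnalyticAt ℂ (fun w => deriv f z * (f (z + w) - f z)) 0 :=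
      analyticAt_const.mul (hfz.sub analyticAt_const)
    have hden : AnalyticAt ℂ
        (fun w => (1/2 : ℂ) * iteratedDeriv 2 f z * (f (z + w) - f z) + (deriv f z)^2) 0 :=
      (analyticAt_const.mul (hfz.sub analyticAt_const)).add analyticAt_const
    have hden0 : ((1/2 : ℂ) * iteratedDeriv 2 f z * (f (z + 0) - f z) + (deriv f z)^2) ≠ 0 := by
      simpa using pow_ne_zero 2 hf'
    exact hnum.div hden hden0
  obtain ⟨p, hp⟩ := hV
  obtain ⟨pg, hpg⟩ := hg
  -- Taylor coefficients of V compute tamanoiS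
  have hVw : ∀ w, tamanoiV f z w = a * g w / (b * g w + a ^ 2) := fun w => rfl
  have hcoeff : ∀ m : ℕ, tamanoiS f m z = ((m+1).factorial : ℂ) * p.coeff (m+1) := by
    intro m
    obtain ⟨rb, hball⟩ := hp
    have h1 := hball.factorial_smul (1 : ℂ) (m+1)
    rw [tamanoiS, iteratedDeriv_eq_iteratedFDeriv, ← h1,
      FormalMultilinearSeries.apply_eq_pow_smul_coeff]
    simp [nsmul_eq_mul]
  -- derivatives of g
  have hderg : deriv g = fun w => deriv f (z + w) := by
    funext w
    have h1 : deriv g w = deriv (fun w => f (z + w)) w := deriv_sub_const _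
    have h2 := congrFun (iteratedDeriv_comp_const_add 1 f z) w
    simp only [iteratedDeriv_one] at h2
    rw [h1, h2]
  have hderg0 : deriv g 0 = a := by rw [hderg]; simp [ha]
  have hg2 : iteratedDeriv 2 g 0 = iteratedDeriv 2 f z := by
    have h1 : iteratedDeriv 2 g 0 = deriv (deriv g) 0 := by
      rw [show (2:ℕ) = 1 + 1 from rfl, iteratedDeriv_succ, iteratedDeriv_one]
    have h2 := congrFun (iteratedDeriv_comp_const_add 1 (deriv f) z) 0
    simp only [iteratedDeriv_one] at h2
    have h3 : iteratedDeriv 2 f z = deriv (deriv f) z := by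
      rw [show (2:ℕ) = 1 + 1 from rfl, iteratedDeriv_succ, iteratedDeriv_one]
    rw [h1, hderg, h2, h3, add_zero]
  -- coefficients of pg
  have hpgc1 : pg.coeff 1 = a := by
    have := hpg.deriv
    rw [hderg0] at this
    rw [FormalMultilinearSeries.coeff]
    exact this.symm
  have hpgc2 : pg.coeff 2 = b := by
    obtain ⟨rg, hgball⟩ := hpg
    have h1 := hgball.factorial_smul (1 : ℂ) 2
    rw [← iteratedDeriv_eq_iteratedFDeriv, hg2,
      FormalMultilinearSeries.apply_eq_pow_smul_coeff] at h1
    simp only [one_pow, one_smul, nsmul_eq_mul] at h1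
    rw [hb, ← h1]
    norm_num
    ring
  -- dslope functions
  set d1 : ℂ → ℂ := dslope g 0 with hd1def
  set d2 : ℂ → ℂ := dslope d1 0 with hd2def
  have hp1 : HasFPowerSeriesAt d1 pg.fslope 0 := hpg.has_fpower_series_dslope_fslope
  have hp2 : HasFPowerSeriesAt d2 pg.fslope.fslope 0 := hp1.has_fpower_series_dslope_fslope
  have hd10 : d1 0 = a := by rw [hd1def, dslope_same, hderg0]
  have hd20 : d2 0 = b := by
    rw [hd2def, dslope_same]
    have h1 := hp1.deriv
    have h2 : pg.fslope.coeff 1 = b := by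
      rw [FormalMultilinearSeries.coeff_fslope, hpgc2]
    rw [h1]
    exact h2
  -- g nonvanishing on a punctured neighborhood
  have hd1ne : ∀ᶠ w in 𝓝 (0:ℂ), d1 w ≠ 0 := by
    apply hp1.continuousAt.eventually_ne
    rw [hd10]; exact hf'
  have hd1w : ∀ w : ℂ, w ≠ 0 → d1 w = g w / w := by
    intro w hw
    rw [hd1def, dslope_of_ne g hw, slope_def_field, hgzero, sub_zero, sub_zero]
  have hgne : ∀ᶠ w in 𝓝[≠] (0:ℂ), g w ≠ 0 := by
    filter_upwards [hd1ne.filter_mono nhdsWithin_le_nhds, self_mem_nhdsWithin] with w h1 h2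
    intro hgw
    apply h1
    rw [hd1w w h2, hgw, zero_div]
  -- the limit of 1/w - a / g w at 0 is b / a
  have htend : Filter.Tendsto (fun w => 1/w - a / g w) (𝓝[≠] (0:ℂ)) (𝓝 (b / a)) := by
    have hc : Filter.Tendsto (fun w => d2 w / d1 w) (𝓝 (0:ℂ)) (𝓝 (b / a)) := by
      have := (hp2.continuousAt.tendsto.div hp1.continuousAt.tendsto (by rw [hd10]; exact hf'))
      rwa [hd20, hd10] at this
    apply (hc.mono_left nhdsWithin_le_nhds).congr'
    filter_upwards [hgne, self_mem_nhdsWithin] with w hgw hw'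
    have hw : w ≠ 0 := hw'
    have hd2w : d2 w = (g w / w - a) / w := by
      rw [hd2def, dslope_of_ne d1 hw, slope_def_field, hd10, hd1w w hw, sub_zero]
    rw [hd2w, hd1w w hw]
    field_simp
  -- the power series h(w) = ∑ ψ(m+1) w^m
  set c : ℕ → ℂ := fun m => ψ (m+1) with hcdef
  set Ps : FormalMultilinearSeries ℂ ℂ ℂ := FormalMultilinearSeries.ofScalars ℂ c with hPsdef
  have hw0r : ‖((r/2 : ℝ) : ℂ)‖ = r/2 := by
    rw [Complex.norm_real, Real.norm_eq_abs, abs_of_pos (by linarith)]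
  have hw0ne : ((r/2 : ℝ) : ℂ) ≠ 0 := by
    simp only [ne_eq, Complex.ofReal_eq_zero]
    intro h; linarith
  have hsum0 : Summable (fun m => c m * ((r/2 : ℝ) : ℂ) ^ m) :=
    (hψ _ hw0ne (by rw [hw0r]; linarith)).summable
  have hrad : 0 < Ps.radius := by
    have htend0 : Filter.Tendsto (fun m => ‖Ps m‖ * ((r/2 : ℝ).toNNReal : ℝ) ^ m)
        Filter.atTop (𝓝 0) := by
      have := hsum0.tendsto_atTop_zero.norm
      simp only [norm_zero] at this
      apply this.congr
      intro m
      rw [norm_mul, norm_pow, hw0r, hPsdef, FormalMultilinearSeries.ofScalars_norm,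
        Real.coe_toNNReal _ (by linarith)]
    have hle := Ps.le_radius_of_tendsto htend0
    refine lt_of_lt_of_le ?_ hle
    rw [ENNReal.coe_pos, ← NNReal.coe_pos, Real.coe_toNNReal _ (by linarith)]
    linarith
  set h : ℂ → ℂ := Ps.sum with hhdef
  have hhat : HasFPowerSeriesAt h Ps 0 := ⟨Ps.radius, Ps.hasFPowerSeriesOnBall hrad⟩
  have hPscoeff : ∀ m, Ps.coeff m = c m := by
    intro m
    show (Ps m) 1 = c m
    rw [show (1 : Fin m → ℂ) = fun _ => (1:ℂ) from rfl, hPsdef,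
      FormalMultilinearSeries.ofScalars_apply_eq]
    simp
  have hhsum : ∀ᶠ w in 𝓝 (0:ℂ), HasSum (fun m => ψ (m+1) * w ^ m) (h w) := by
    have := hasFPowerSeriesAt_iff.mp hhat
    filter_upwards [this] with w hw
    have : (fun m => ψ (m+1) * w ^ m) = fun m => w ^ m • Ps.coeff m := by
      funext m; rw [hPscoeff m, smul_eq_mul, hcdef]; ring
    rw [this]
    simpa using hw
  have hh0 : h 0 = ψ 1 := by
    have h1 := hhsum.self_of_nhds
    have h2 : HasSum (fun m => ψ (m+1) * (0:ℂ) ^ m) (ψ 1) := by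
      have := hasSum_single (f := fun m => ψ (m+1) * (0:ℂ) ^ m) 0 (by
        intro m hm
        rcases Nat.exists_eq_succ_of_ne_zero hm with ⟨k, rfl⟩
        simp [pow_succ])
      simpa using this
    exact h1.unique h2
  -- identify h with the explicit expression on a punctured neighborhood
  have heqh : ∀ᶠ w in 𝓝[≠] (0:ℂ), h w = 1/w - a / g w := by
    have hrball : ∀ᶠ w in 𝓝 (0:ℂ), ‖w‖ < r := by
      have := Metric.ball_mem_nhds (0:ℂ) hr
      filter_upwards [this] with w hw
      simpa [dist_zero_right] using hw
    filter_upwards [hhsum.filter_mono nhdsWithin_le_nhds,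
      hrball.filter_mono nhdsWithin_le_nhds, self_mem_nhdsWithin] with w h1 h2 h3
    exact h1.unique (hψ w h3 h2)
  -- ψ 1 = b / a
  have hψ1 : ψ 1 = b / a := by
    have htendh : Filter.Tendsto (fun w => 1/w - a / g w) (𝓝[≠] (0:ℂ)) (𝓝 (ψ 1)) := by
      have h1 : Filter.Tendsto h (𝓝[≠] (0:ℂ)) (𝓝 (ψ 1)) := by
        have := hhat.continuousAt.tendsto.mono_left
          (nhdsWithin_le_nhds (s := {(0:ℂ)}ᶜ))
        rwa [hh0] at this
      exact h1.congr' heqh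
    exact tendsto_nhds_unique htendh htend
  have hba : b = a * ψ 1 := by rw [hψ1]; field_simp
  -- functional equation V w = w + (w h w - ψ 1 w) V w
  have hfun : ∀ᶠ w in 𝓝[≠] (0:ℂ),
      tamanoiV f z w = w + (w * h w - ψ 1 * w) * tamanoiV f z w := by
    have hφ : ∀ᶠ w in 𝓝 (0:ℂ), ψ 1 * w + 1 - w * h w ≠ 0 := by
      have hcont : ContinuousAt (fun w => ψ 1 * w + 1 - w * h w) 0 :=
        (((continuousAt_const.mul continuousAt_id).add continuousAt_const).sub
          (continuousAt_id.mul hhat.continuousAt))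
      have := hcont.eventually_ne (y := 0) (by simp)
      exact this
    filter_upwards [hgne, heqh, hφ.filter_mono nhdsWithin_le_nhds, self_mem_nhdsWithin]
      with w hgw hhw hφw hw'
    have hw : w ≠ 0 := hw'
    have haw : a * w = g w * (1 - w * h w) := by
      field_simp [hw, hgw] at hhw
      linear_combination hhw
    have hDw : (b * g w + a^2) * w = a * g w * (ψ 1 * w + 1 - w * h w) := by
      linear_combination (g w * w) * hba + a * haw
    have hD : b * g w + a^2 ≠ 0 := by
      intro hD0
      rw [hD0, zero_mul] at hDw
      exact (mul_ne_zero (mul_ne_zero hf' hgw) hφw) hDw.symm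
    rw [hVw w, div_eq_iff hD, add_mul, mul_assoc (w * h w - ψ 1 * w), div_mul_cancel₀ _ hD]
    linear_combination -hDw
  -- the q-series
  set q : ℕ → ℂ := fun k => if 2 ≤ k then ψ k else 0 with hqdef
  have hQsum : ∀ᶠ w in 𝓝 (0:ℂ), HasSum (fun k => q k * w ^ k) (w * h w - ψ 1 * w) := by
    filter_upwards [hhsum] with w hsum
    have h1 : HasSum (fun m => ψ (m+1) * w ^ (m+1)) (w * h w) := by
      have h0 := hsum.mul_left w
      rwa [show (fun m => w * (ψ (m+1) * w ^ m)) = fun m => ψ (m+1) * w ^ (m+1)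
        from funext fun m => by ring] at h0
    have h2 : HasSum (fun j => ψ (j+2) * w ^ (j+2)) (w * h w - ψ 1 * w) := by
      have heq : (w * h w - ψ 1 * w) + ∑ i ∈ Finset.range 1, ψ (i+1) * w ^ (i+1) = w * h w := by
        simp [Finset.sum_range_one]
      have h3 := (hasSum_nat_add_iff (f := fun m => ψ (m+1) * w ^ (m+1)) 1).2 (heq ▸ h1)
      exact h3
    have h4 : HasSum (fun j => q (j+2) * w ^ (j+2))
        ((w * h w - ψ 1 * w) - ∑ i ∈ Finset.range 2, q i * w ^ i) := by
      have hz : ∑ i ∈ Finset.range 2, q i * w ^ i = 0 := by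
        rw [Finset.sum_range_succ, Finset.sum_range_one]
        simp [hqdef]
      rw [hz, sub_zero]
      have : (fun j => q (j+2) * w ^ (j+2)) = fun j => ψ (j+2) * w ^ (j+2) := by
        funext j
        simp [hqdef]
      rw [this]
      exact h2
    exact (hasSum_nat_add_iff' (f := fun k => q k * w ^ k) 2).1 h4
  -- summability of norms for q-series
  have hqnorm : ∀ᶠ w in 𝓝 (0:ℂ), Summable (fun k => ‖q k * w ^ k‖) := by
    rw [Metric.eventually_nhds_iff]
    refine ⟨r/4, by linarith, fun {w} hw => ?_⟩
    rw [dist_zero_right] at hw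
    have hL : Summable (fun m => ‖ψ (m+1) * w ^ m‖) := by
      apply aux_summable_norm (w₀ := ((r/2 : ℝ) : ℂ)) hsum0
      rw [hw0r]; linarith
    have hL2 : Summable (fun m => ‖ψ (m+1) * w ^ m‖ * ‖w‖) := hL.mul_right _
    have hL3 : Summable (fun m => ‖q (m+1) * w ^ (m+1)‖) := by
      apply Summable.of_nonneg_of_le (fun m => norm_nonneg _) _ hL2
      intro m
      match m with
      | 0 => simp [hqdef]; positivity
      | (m+1) =>
        have hq2 : q (m+1+1) = ψ (m+2) := by simp [hqdef]
        rw [hq2, norm_mul, norm_mul, norm_pow, norm_pow, pow_succ]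
        ring_nf
        exact le_refl _
    exact (summable_nat_add_iff 1).1 hL3
  -- the V-series and its norm summability
  have hVsum : ∀ᶠ w in 𝓝 (0:ℂ), HasSum (fun m => p.coeff m * w ^ m) (tamanoiV f z w) := by
    filter_upwards [hasFPowerSeriesAt_iff.mp hp] with w hw
    have : (fun m => p.coeff m * w ^ m) = fun m => w ^ m • p.coeff m := by
      funext m; rw [smul_eq_mul]; ring
    rw [this]
    simpa using hw
  have hsnorm : ∀ᶠ w in 𝓝 (0:ℂ), Summable (fun m => ‖p.coeff m * w ^ m‖) := by
    rw [Metric.eventually_nhds_iff] at hVsum ⊢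
    obtain ⟨ε, hε, hB⟩ := hVsum
    refine ⟨ε/2, by linarith, fun {w} hw => ?_⟩
    rw [dist_zero_right] at hw
    have hw₀ : dist ((2*ε/3 : ℝ) : ℂ) 0 < ε := by
      rw [dist_zero_right, Complex.norm_real, Real.norm_eq_abs, abs_of_pos (by linarith)]
      linarith
    apply aux_summable_norm (hB hw₀).summable
    rw [Complex.norm_real, Real.norm_eq_abs, abs_of_pos (by linarith)]
    linarith
  -- the combined coefficient sequence
  set d : ℕ → ℂ := fun nn => (if nn = 1 then (1:ℂ) else 0) +
    ∑ kl ∈ Finset.HasAntidiagonal.antidiagonal nn, q kl.1 * p.coeff kl.2 with hddef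
  have hd0 : d 0 = 0 := by
    rw [hddef]
    simp [Finset.Nat.antidiagonal_zero, hqdef]
  have hdsum : ∀ᶠ w in 𝓝 (0:ℂ), HasSum (fun nn => d nn * w ^ nn) (tamanoiV f z w) := by
    have hfun' : ∀ᶠ w in 𝓝 (0:ℂ), w ≠ 0 →
        tamanoiV f z w = w + (w * h w - ψ 1 * w) * tamanoiV f z w := by
      have := eventually_nhdsWithin_iff.1 hfun
      filter_upwards [this] with w hw hw0
      exact hw hw0
    filter_upwards [hVsum, hQsum, hsnorm, hqnorm, hfun'] with w hVs hQs hsn hqn hfe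
    by_cases hw : w = 0
    · subst hw
      have hV0 : tamanoiV f z 0 = 0 := by
        rw [hVw 0, hgzero]
        simp
      rw [hV0]
      have hfn : (fun nn => d nn * (0:ℂ) ^ nn) = fun _ => 0 := by
        funext nn
        match nn with
        | 0 => simpa using hd0
        | (nn+1) => simp [pow_succ]
      rw [hfn]
      exact hasSum_zero
    · have hmul : HasSum (fun nn => (∑ kl ∈ Finset.HasAntidiagonal.antidiagonal nn, q kl.1 * p.coeff kl.2) * w ^ nn)
          ((w * h w - ψ 1 * w) * tamanoiV f z w) := by
        have hsummable := (summable_norm_sum_mul_antidiagonal_of_summable_norm hqn hsn).of_norm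
        have htsum := tsum_mul_tsum_eq_tsum_sum_antidiagonal_of_summable_norm hqn hsn
        rw [hQs.tsum_eq, hVs.tsum_eq] at htsum
        have h5 := hsummable.hasSum
        rw [← htsum] at h5
        have hfn : (fun nn => ∑ kl ∈ Finset.HasAntidiagonal.antidiagonal nn,
            (q kl.1 * w ^ kl.1) * (p.coeff kl.2 * w ^ kl.2)) =
            fun nn => (∑ kl ∈ Finset.HasAntidiagonal.antidiagonal nn, q kl.1 * p.coeff kl.2) * w ^ nn := by
          funext nn
          rw [Finset.sum_mul]
          apply Finset.sum_congr rfl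
          intro kl hkl
          have hkl' := Finset.HasAntidiagonal.mem_antidiagonal.1 hkl
          rw [← hkl', pow_add]
          ring
        rwa [hfn] at h5
      have hone : HasSum (fun nn => (if nn = 1 then (1:ℂ) else 0) * w ^ nn) w := by
        have h6 := hasSum_ite_eq 1 w
        have hfn : (fun nn => (if nn = 1 then (1:ℂ) else 0) * w ^ nn) =
            fun nn => if nn = 1 then w else 0 := by
          funext nn
          split_ifs with hnn
          · subst hnn; simp
          · simp
        rw [hfn]
        exact h6
      have h7 := hone.add hmul
      rw [← hfe hw] at h7
      have hfn2 : (fun nn => d nn * w ^ nn) = fun nn =>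
          (if nn = 1 then (1:ℂ) else 0) * w ^ nn +
          (∑ kl ∈ Finset.HasAntidiagonal.antidiagonal nn, q kl.1 * p.coeff kl.2) * w ^ nn := by
        funext nn
        rw [hddef]
        ring
      rwa [hfn2]
  -- uniqueness of power series: p.coeff = d
  have hdat : HasFPowerSeriesAt (tamanoiV f z) (FormalMultilinearSeries.ofScalars ℂ d) 0 := by
    rw [hasFPowerSeriesAt_iff]
    have hdcoeff : ∀ nn, (FormalMultilinearSeries.ofScalars ℂ d).coeff nn = d nn := by
      intro nn
      show (FormalMultilinearSeries.ofScalars ℂ d nn) 1 = d nn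
      rw [show (1 : Fin nn → ℂ) = fun _ => (1:ℂ) from rfl,
        FormalMultilinearSeries.ofScalars_apply_eq]
      simp
    filter_upwards [hdsum] with w hw
    have : (fun nn => w ^ nn • (FormalMultilinearSeries.ofScalars ℂ d).coeff nn) =
        fun nn => d nn * w ^ nn := by
      funext nn; rw [hdcoeff nn, smul_eq_mul]; ring
    rw [this]
    simpa using hw
  have hpd : ∀ nn, p.coeff nn = d nn := by
    intro nn
    have := hp.eq_formalMultilinearSeries hdat
    rw [this]
    show (FormalMultilinearSeries.ofScalars ℂ d nn) 1 = d nn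
    rw [show (1 : Fin nn → ℂ) = fun _ => (1:ℂ) from rfl,
      FormalMultilinearSeries.ofScalars_apply_eq]
    simp
  -- special coefficient values
  have hs0 : p.coeff 0 = 0 := by rw [hpd 0]; exact hd0
  have hs1 : p.coeff 1 = 1 := by
    rw [hpd 1]
    simp only [hddef]
    rw [Finset.Nat.sum_antidiagonal_eq_sum_range_succ_mk]
    simp [hqdef, Finset.sum_range_succ]
  have hs2 : p.coeff 2 = 0 := by
    rw [hpd 2]
    simp only [hddef]
    rw [Finset.Nat.sum_antidiagonal_eq_sum_range_succ_mk]
    rw [Finset.sum_range_succ, Finset.sum_range_succ, Finset.sum_range_one]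
    simp [hqdef, hs0]
  -- final computation
  rw [hcoeff n]
  have hfac : ((n+1).factorial : ℂ) ≠ 0 := Nat.cast_ne_zero.2 (Nat.factorial_ne_zero _)
  rw [mul_div_cancel_left₀ _ hfac]
  have hsum_rw : ∀ k ∈ Finset.Icc 2 (n-2),
      ψ k * (tamanoiS f (n-k) z / (((n-k)+1).factorial : ℂ)) = ψ k * p.coeff ((n-k)+1) := by
    intro k hk
    rw [hcoeff (n-k), mul_div_cancel_left₀ _ (Nat.cast_ne_zero.2 (Nat.factorial_ne_zero _))]
  rw [Finset.sum_congr rfl hsum_rw]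
  rw [hpd (n+1)]
  simp only [hddef]
  have hif : (if n+1 = 1 then (1:ℂ) else 0) = 0 := by
    rw [if_neg]; omega
  rw [hif, zero_add, Finset.Nat.sum_antidiagonal_eq_sum_range_succ_mk]
  have hsub : insert n (Finset.Icc 2 (n-2)) ⊆ Finset.range (n+2) := by
    intro k hk
    simp only [Finset.mem_insert, Finset.mem_Icc] at hk
    rw [Finset.mem_range]
    omega
  have hz : ∀ k ∈ Finset.range (n+2), k ∉ insert n (Finset.Icc 2 (n-2)) →
      q k * p.coeff (n+1-k) = 0 := by
    intro k hk hk'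
    rw [Finset.mem_range] at hk
    have hk'' : ¬(k = n ∨ (2 ≤ k ∧ k ≤ n - 2)) := by
      simpa [Finset.mem_insert, Finset.mem_Icc] using hk'
    by_cases h2 : k < 2
    · have hq0 : q k = 0 := by
        rw [hqdef]
        simp only [ite_eq_right_iff]
        intro hh; omega
      rw [hq0, zero_mul]
    · have : k = n - 1 ∨ k = n + 1 := by omega
      rcases this with hcase | hcase
      · have he : n + 1 - k = 2 := by omega
        rw [he, hs2, mul_zero]
      · have he : n + 1 - k = 0 := by omega
        rw [he, hs0, mul_zero]
  rw [← Finset.sum_subset hsub hz]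
  rw [Finset.sum_insert (by simp only [Finset.mem_Icc]; omega)]
  have hqnn : q n = ψ n := by rw [hqdef]; simp [hn]
  have h11 : n + 1 - n = 1 := by omega
  rw [hqnn, h11, hs1, mul_one]
  congr 1
  apply Finset.sum_congr rfl
  intro k hk
  rw [Finset.mem_Icc] at hk
  have hq1 : q k = ψ k := by rw [hqdef]; simp [hk.1]
  have h2 : n + 1 - k = (n - k) + 1 := by omega
  rw [hq1, h2]
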